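/- Let X and Y be connected finite polyhedra. Every n-valued map f: X → D_n(Y) has a partition into irreducibles f = {f_1,...,f_k} (possibly with k = 1), and this partition is unique up to the ordering of the maps f_i. -/

import Mathlib

open Function Set

/-- The ordered configuration space of `n` points in `Y`. -/
def OrdConf (n : ℕ) (Y : Type*) [TopologicalSpace Y] : Type _ :=
  {y : Fin n → Y // Function.Injective y}

instance (n : ℕ) (Y : Type*) [TopologicalSpace Y] : TopologicalSpace (OrdConf n Y) :=
  instTopologicalSpaceSubtype

/-- Two ordered configurations are equivalent when they differ by a permutation. -/
def confSetoid (n : ℕ) (Y : Type*) [TopologicalSpace Y] : Setoid (OrdConf n Y) where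
  r a b := ∃ σ : Equiv.Perm (Fin n), a.1 ∘ σ = b.1
  iseqv := by
    constructor
    · intro a; exact ⟨Equiv.refl _, rfl⟩
    · rintro a b ⟨σ, h⟩
      refine ⟨σ.symm, funext fun i => ?_⟩
      have := congrFun h (σ.symm i)
      simpa using this.symm
    · rintro a b c ⟨σ, h1⟩ ⟨τ, h2⟩
      refine ⟨τ.trans σ, funext fun i => ?_⟩
      have h1' := congrFun h1 (τ i)
      have h2' := congrFun h2 i
      simp only [Function.comp_apply] at h1' h2' ⊢
      simp [Equiv.trans_apply, h1', h2']

/-- The unordered configuration space `D_n(Y)` of `n` points in `Y`,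
with the quotient topology. -/
def UnordConf (n : ℕ) (Y : Type*) [TopologicalSpace Y] : Type _ :=
  Quotient (confSetoid n Y)

instance (n : ℕ) (Y : Type*) [TopologicalSpace Y] : TopologicalSpace (UnordConf n Y) :=
  instTopologicalSpaceQuotient

/-- The underlying `n`-element subset of `Y` determined by an unordered configuration. -/
def UnordConf.values {n : ℕ} {Y : Type*} [TopologicalSpace Y] : UnordConf n Y → Set Y :=
  Quotient.lift (fun a => Set.range a.1) (by
    rintro a b ⟨σ, h⟩
    show Set.range a.1 = Set.range b.1
    rw [← h, Set.range_comp]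
    simp)

/-- An `n`-valued map from `X` to `Y` is a continuous map `X → D_n(Y)`. -/
abbrev NValuedMap (X Y : Type*) [TopologicalSpace X] [TopologicalSpace Y] (n : ℕ) :=
  C(X, UnordConf n Y)

/-- `g` is a submap of `f` when `g(x) ⊆ f(x)` for all `x`. -/
def IsSubmap {X Y : Type*} [TopologicalSpace X] [TopologicalSpace Y] {k n : ℕ}
    (g : NValuedMap X Y k) (f : NValuedMap X Y n) : Prop :=
  ∀ x : X, (g x).values ⊆ (f x).values

/-- An `n`-valued map is irreducible when it admits no proper (`k`-valued, `0 < k < n`) submap. -/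
def IsIrreducibleNV {X Y : Type*} [TopologicalSpace X] [TopologicalSpace Y] {n : ℕ}
    (f : NValuedMap X Y n) : Prop :=
  ¬ ∃ (k : ℕ) (g : NValuedMap X Y k), 0 < k ∧ k < n ∧ IsSubmap g f

/-- A partition of an `n`-valued map `f` into `l` multimaps:
a family of `kᵢ`-valued maps with `k₁ + ⋯ + k_l = n` whose values unite to those of `f`. -/
structure NVPartition {X Y : Type*} [TopologicalSpace X] [TopologicalSpace Y] {n : ℕ}
    (f : NValuedMap X Y n) (l : ℕ) where
  card : Fin l → ℕ
  card_pos : ∀ i, 0 < card i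
  maps : ∀ i, NValuedMap X Y (card i)
  sum_card : ∑ i, card i = n
  values_eq : ∀ x : X, (f x).values = ⋃ i, UnordConf.values ((maps i) x)

/-- A partition is into irreducibles when every member is irreducible. -/
def NVPartition.IsIrreduciblePartition {X Y : Type*} [TopologicalSpace X] [TopologicalSpace Y]
    {n : ℕ} {f : NValuedMap X Y n} {l : ℕ} (P : NVPartition f l) : Prop :=
  ∀ i, IsIrreducibleNV (P.maps i)

/-- A space is a (compact) finite polyhedron when it is homeomorphic to the underlying
space of a finite simplicial complex in some Euclidean space. -/
def IsFinitePolyhedron (X : Type*) [TopologicalSpace X] : Prop :=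
  ∃ (N : ℕ) (K : Geometry.SimplicialComplex ℝ (EuclideanSpace ℝ (Fin N))),
    K.faces.Finite ∧ Nonempty (X ≃ₜ K.space)
section Basics

variable {Y : Type*} [TopologicalSpace Y] {n m : ℕ}

lemma UnordConf.values_mk (a : OrdConf n Y) :
    UnordConf.values (Y:=Y) (Quotient.mk (confSetoid n Y) a) = Set.range a.1 := rfl

lemma UnordConf.values_injective :
    Function.Injective (UnordConf.values (n := n) (Y := Y)) := by
  intro c c' h
  induction c using Quotient.ind
  induction c' using Quotient.ind
  rename_i a b
  have h : Set.range a.1 = Set.range b.1 := h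
  refine Quotient.sound ?_
  have ea := Equiv.ofInjective a.1 a.2
  have eb := Equiv.ofInjective b.1 b.2
  refine ⟨((Equiv.ofInjective b.1 b.2).trans ((Equiv.setCongr h.symm).trans
    (Equiv.ofInjective a.1 a.2).symm)).symm.symm, funext fun i => ?_⟩
  simp only [Function.comp_apply, Equiv.symm_symm, Equiv.trans_apply]
  have : ∀ z : Set.range a.1, a.1 ((Equiv.ofInjective a.1 a.2).symm z) = z := by
    intro z
    conv_rhs => rw [← (Equiv.ofInjective a.1 a.2).apply_symm_apply z]
    rfl
  rw [this]
  rfl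

lemma UnordConf.values_finite (c : UnordConf n Y) : c.values.Finite := by
  induction c using Quotient.ind
  exact Set.finite_range _

lemma UnordConf.ncard_values (c : UnordConf n Y) : c.values.ncard = n := by
  induction c using Quotient.ind
  rename_i a
  show (Set.range a.1).ncard = n
  rw [← Set.image_univ, Set.ncard_image_of_injective _ a.2, Set.ncard_univ]
  simp

/-- Build an unordered configuration from an injective tuple and an index set. -/
noncomputable def mkConf (y : Fin n → Y) (hy : Function.Injective y)
    (A : Finset (Fin n)) (hA : A.card = m) : UnordConf m Y :=
  Quotient.mk _ ⟨fun j => y ((A.orderIsoOfFin hA j : Fin n)),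
    fun j j' h => by
      apply (A.orderIsoOfFin hA).injective
      exact Subtype.ext (hy h)⟩

lemma mkConf_values (y : Fin n → Y) (hy : Function.Injective y)
    (A : Finset (Fin n)) (hA : A.card = m) :
    (mkConf y hy A hA).values = y '' (A : Set (Fin n)) := by
  show Set.range _ = _
  ext z
  constructor
  · rintro ⟨j, rfl⟩
    exact ⟨_, (A.orderIsoOfFin hA j).2, rfl⟩
  · rintro ⟨i, hi, rfl⟩
    exact ⟨(A.orderIsoOfFin hA).symm ⟨i, hi⟩, by simp⟩

/-- Disjoint open neighborhoods around the points of an injective tuple. -/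
lemma exists_disjoint_opens [T2Space Y] (y : Fin n → Y) (hy : Function.Injective y) :
    ∃ V : Fin n → Set Y, (∀ i, IsOpen (V i)) ∧ (∀ i, y i ∈ V i) ∧
      Pairwise (Function.onFun Disjoint V) := by
  obtain ⟨U, hU, hd⟩ := (Set.finite_range y).t2_separation
  refine ⟨fun i => U (y i), fun i => (hU (y i)).2, fun i => (hU (y i)).1, ?_⟩
  intro i j hij
  exact hd (Set.mem_range_self i) (Set.mem_range_self j) (fun h => hij (hy h))

end Basics
section Basic2

variable {Y : Type*} [TopologicalSpace Y] {n m : ℕ}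

lemma continuous_confMk : Continuous (Quotient.mk (confSetoid m Y) :
    OrdConf m Y → UnordConf m Y) :=
  @continuous_quotient_mk' _ _ (confSetoid m Y)

/-- The basic open sets of the unordered configuration space. -/
lemma isOpen_basic {ι : Type*} [Finite ι] (V : ι → Set Y) (hV : ∀ i, IsOpen (V i)) :
    IsOpen {c : UnordConf m Y |
      (∀ p ∈ c.values, ∃ i, p ∈ V i) ∧ (∀ i, ∃ p ∈ c.values, p ∈ V i)} := by
  refine (@isQuotientMap_quotient_mk' (OrdConf m Y) _ (confSetoid m Y)).isOpen_preimage.mp ?_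
  have : (@Set.preimage (OrdConf m Y) (UnordConf m Y) (@Quotient.mk' _ (confSetoid m Y)) {c : UnordConf m Y |
      (∀ p ∈ c.values, ∃ i, p ∈ V i) ∧ (∀ i, ∃ p ∈ c.values, p ∈ V i)}) =
      @Set.preimage (OrdConf m Y) (Fin m → Y) Subtype.val ((⋂ j, ⋃ i, (fun y : Fin m → Y => y j) ⁻¹' V i) ∩
        (⋂ i, ⋃ j, (fun y : Fin m → Y => y j) ⁻¹' V i)) := by
    ext a
    show ((∀ p ∈ UnordConf.values (Y := Y) (Quotient.mk (confSetoid m Y) a), ∃ i, p ∈ V i) ∧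
        (∀ i, ∃ p ∈ UnordConf.values (Y := Y) (Quotient.mk (confSetoid m Y) a), p ∈ V i)) ↔
      a.1 ∈ (⋂ j, ⋃ i, (fun y : Fin m → Y => y j) ⁻¹' V i) ∩
        (⋂ i, ⋃ j, (fun y : Fin m → Y => y j) ⁻¹' V i)
    simp only [Set.mem_preimage, Set.mem_setOf_eq, Set.mem_inter_iff, Set.mem_iInter,
      Set.mem_iUnion]
    constructor
    · rintro ⟨h1, h2⟩
      refine ⟨fun j => h1 _ ⟨j, rfl⟩, fun i => ?_⟩
      obtain ⟨p, ⟨j, rfl⟩, hp⟩ := h2 i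
      exact ⟨j, hp⟩
    · rintro ⟨h1, h2⟩
      refine ⟨?_, fun i => ?_⟩
      · rintro p ⟨j, rfl⟩; exact h1 j
      · obtain ⟨j, hj⟩ := h2 i
        exact ⟨a.1 j, ⟨j, rfl⟩, hj⟩
  refine (congrArg IsOpen this).mpr ?_
  apply IsOpen.preimage continuous_subtype_val
  apply IsOpen.inter
  · exact isOpen_iInter_of_finite fun j =>
      isOpen_iUnion fun i => (hV i).preimage (continuous_apply j)
  · exact isOpen_iInter_of_finite fun i =>
      isOpen_iUnion fun j => (hV i).preimage (continuous_apply j)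

end Basic2
section Lift

variable {X Y : Type*} [TopologicalSpace X] [TopologicalSpace Y] {n m : ℕ}

lemma exists_unique_point {V : Fin m → Set Y} (hd : Pairwise (Function.onFun Disjoint V))
    (c : UnordConf m Y) (h1 : ∀ p ∈ c.values, ∃ i, p ∈ V i)
    (h2 : ∀ i, ∃ p ∈ c.values, p ∈ V i) (i : Fin m) :
    ∃! p, p ∈ c.values ∩ V i := by
  induction c using Quotient.ind
  rename_i a
  have hval : ∀ p, p ∈ UnordConf.values (Y := Y) (Quotient.mk (confSetoid m Y) a)
      ↔ ∃ j, a.1 j = p := fun p => Iff.rfl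
  have hψ : ∀ j : Fin m, ∃ k, a.1 j ∈ V k := fun j => h1 _ ⟨j, rfl⟩
  set ψ : Fin m → Fin m := fun j => (hψ j).choose with hψdef
  have hψ2 : ∀ j, a.1 j ∈ V (ψ j) := fun j => (hψ j).choose_spec
  have hmem : ∀ j k, a.1 j ∈ V k → ψ j = k := by
    intro j k hk
    by_contra hne
    exact Set.disjoint_left.mp (hd hne) (hψ2 j) hk
  have hsurj : Function.Surjective ψ := by
    intro k
    obtain ⟨p, hp, hpk⟩ := h2 k
    obtain ⟨j, rfl⟩ := (hval p).mp hp
    exact ⟨j, hmem j k hpk⟩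
  have hinj : Function.Injective ψ := Finite.injective_iff_surjective.mpr hsurj
  obtain ⟨j, hj⟩ := hsurj i
  refine ⟨a.1 j, ⟨⟨j, rfl⟩, hj ▸ hψ2 j⟩, ?_⟩
  rintro q ⟨hq, hqi⟩
  obtain ⟨j', rfl⟩ := (hval q).mp hq
  have : ψ j' = i := hmem j' i hqi
  rw [hinj (this.trans hj.symm)]

lemma exists_local_lift [T2Space Y] [Nonempty Y]
    (f : NValuedMap X Y n) (x₀ : X) :
    ∃ (W : Set X) (F : X → Fin n → Y) (V : Fin n → Set Y),
      IsOpen W ∧ x₀ ∈ W ∧ (∀ i, IsOpen (V i)) ∧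
      Pairwise (Function.onFun Disjoint V) ∧
      (∀ x ∈ W, Function.Injective (F x)) ∧
      (∀ x ∈ W, Set.range (F x) = (f x).values) ∧
      (∀ x ∈ W, ∀ i, F x i ∈ V i) ∧
      (∀ x ∈ W, ContinuousAt F x) := by
  classical
  obtain ⟨a, ha⟩ := Quotient.exists_rep (f x₀)
  obtain ⟨V, hVopen, hVmem, hVd⟩ := exists_disjoint_opens a.1 a.2
  set U : Set (UnordConf n Y) :=
    {c | (∀ p ∈ c.values, ∃ i, p ∈ V i) ∧ (∀ i, ∃ p ∈ c.values, p ∈ V i)} with hUdef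
  have hUopen : IsOpen U := isOpen_basic V hVopen
  set W : Set X := f ⁻¹' U with hWdef
  have hWopen : IsOpen W := hUopen.preimage f.continuous
  have hx₀W : x₀ ∈ W := by
    have hv : (f x₀).values = Set.range a.1 := by rw [← ha]; rfl
    constructor
    · intro p hp
      rw [hv] at hp
      obtain ⟨j, rfl⟩ := hp
      exact ⟨j, hVmem j⟩
    · intro i
      exact ⟨a.1 i, by rw [hv]; exact ⟨i, rfl⟩, hVmem i⟩
  have huniq : ∀ x ∈ W, ∀ i, ∃! p, p ∈ (f x).values ∩ V i := by
    intro x hx i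
    exact exists_unique_point hVd (f x) hx.1 hx.2 i
  set F : X → Fin n → Y := fun x i =>
    if hx : x ∈ W then (huniq x hx i).exists.choose else Classical.arbitrary Y with hFdef
  have hFspec : ∀ x, ∀ hx : x ∈ W, ∀ i, F x i ∈ (f x).values ∩ V i := by
    intro x hx i
    simp only [hFdef, dif_pos hx]
    exact (huniq x hx i).exists.choose_spec
  have hFuniq : ∀ x, ∀ hx : x ∈ W, ∀ i p, p ∈ (f x).values ∩ V i → p = F x i := by
    intro x hx i p hp
    obtain ⟨q, hq, hq2⟩ := huniq x hx i
    rw [hq2 p hp, hq2 (F x i) (hFspec x hx i)]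
  have hinj : ∀ x ∈ W, Function.Injective (F x) := by
    intro x hx i j hij
    by_contra hne
    exact Set.disjoint_left.mp (hVd hne) (hFspec x hx i).2 (hij ▸ (hFspec x hx j).2)
  have hval : ∀ x ∈ W, Set.range (F x) = (f x).values := by
    intro x hx
    apply Set.Subset.antisymm
    · rintro p ⟨i, rfl⟩; exact (hFspec x hx i).1
    · intro p hp
      obtain ⟨i, hi⟩ := hx.1 p hp
      exact ⟨i, (hFuniq x hx i p ⟨hp, hi⟩).symm⟩
  refine ⟨W, F, V, hWopen, hx₀W, hVopen, hVd, hinj, hval,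
    fun x hx i => (hFspec x hx i).2, ?_⟩
  intro x hx
  rw [continuousAt_pi]
  intro i
  rw [ContinuousAt, Filter.tendsto_def]
  intro s hs
  obtain ⟨V', hV'sub, hV'open, hV'mem⟩ := mem_nhds_iff.mp hs
  set U' : Set (UnordConf n Y) :=
    {c | (∀ p ∈ c.values, ∃ k, p ∈ Function.update V i (V i ∩ V') k) ∧
      (∀ k, ∃ p ∈ c.values, p ∈ Function.update V i (V i ∩ V') k)} with hU'def
  have hU'open : IsOpen U' := by
    apply isOpen_basic
    intro k
    rcases eq_or_ne k i with rfl | hk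
    · rw [Function.update_self]; exact (hVopen k).inter hV'open
    · rw [Function.update_of_ne hk]; exact hVopen k
  have hupd_mem : ∀ p k, p ∈ V k → (k = i → p ∈ V') →
      p ∈ Function.update V i (V i ∩ V') k := by
    intro p k h1 h2
    rcases eq_or_ne k i with rfl | hk
    · rw [Function.update_self]; exact ⟨h1, h2 rfl⟩
    · rwa [Function.update_of_ne hk]
  have hxU' : f x ∈ U' := by
    constructor
    · intro p hp
      rw [← hval x hx] at hp
      obtain ⟨k, rfl⟩ := hp
      exact ⟨k, hupd_mem _ k (hFspec x hx k).2 (fun h => h ▸ hV'mem)⟩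
    · intro k
      exact ⟨F x k, (hFspec x hx k).1,
        hupd_mem _ k (hFspec x hx k).2 (fun h => h ▸ hV'mem)⟩
  apply Filter.mem_of_superset ((hWopen.inter (hU'open.preimage f.continuous)).mem_nhds
    ⟨hx, hxU'⟩)
  rintro x' ⟨hx'W, hx'U'⟩
  obtain ⟨p, hp1, hp2⟩ := hx'U'.2 i
  rw [Function.update_self] at hp2
  have : p = F x' i := hFuniq x' hx'W i p ⟨hp1, hp2.1⟩
  show F x' i ∈ s
  exact hV'sub (this ▸ hp2.2)

end Lift
section IndexSet

variable {X Y : Type*} [TopologicalSpace X] [TopologicalSpace Y] {n m : ℕ}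

lemma exists_index_set {f : NValuedMap X Y n} {g : NValuedMap X Y m}
    (hsub : ∀ x, (g x).values ⊆ (f x).values)
    {W : Set X} {F : X → Fin n → Y} {V : Fin n → Set Y} {x₀ : X}
    (hWopen : IsOpen W) (hx₀ : x₀ ∈ W)
    (hVd : Pairwise (Function.onFun Disjoint V))
    (hinj : ∀ x ∈ W, Function.Injective (F x))
    (hval : ∀ x ∈ W, Set.range (F x) = (f x).values)
    (hmemV : ∀ x ∈ W, ∀ i, F x i ∈ V i)
    (hVopen : ∀ i, IsOpen (V i)) :
    ∃ (W' : Set X) (A : Finset (Fin n)), IsOpen W' ∧ x₀ ∈ W' ∧ W' ⊆ W ∧ A.card = m ∧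
      ∀ x ∈ W', (g x).values = F x '' (A : Set (Fin n)) := by
  classical
  have huniqV : ∀ (p : Y) (k k' : Fin n), p ∈ V k → p ∈ V k' → k = k' := by
    intro p k k' h h'
    by_contra hne
    exact Set.disjoint_left.mp (hVd hne) h h'
  set A : Finset (Fin n) := Finset.univ.filter (fun i => F x₀ i ∈ (g x₀).values) with hA
  have hval₀ : (g x₀).values = F x₀ '' (A : Set (Fin n)) := by
    apply Set.Subset.antisymm
    · intro p hp
      have : p ∈ Set.range (F x₀) := (hval x₀ hx₀) ▸ hsub x₀ hp
      obtain ⟨j, rfl⟩ := this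
      exact ⟨j, by simp [hA, hp], rfl⟩
    · rintro p ⟨i, hi, rfl⟩
      simp only [hA, Finset.coe_filter, Set.mem_setOf_eq] at hi
      exact hi.2
  have hcard : A.card = m := by
    have h1 : (g x₀).values.ncard = m := UnordConf.ncard_values _
    rw [hval₀, Set.ncard_image_of_injective _ (hinj x₀ hx₀), Set.ncard_coe_finset] at h1
    exact h1
  set Ug : Set (UnordConf m Y) :=
    {c | (∀ p ∈ c.values, ∃ i : A, p ∈ V i) ∧ (∀ i : A, ∃ p ∈ c.values, p ∈ V i)} with hUg
  have hUgopen : IsOpen Ug := isOpen_basic (fun i : A => V i) (fun i => hVopen i)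
  refine ⟨W ∩ g ⁻¹' Ug, A, hWopen.inter (hUgopen.preimage g.continuous), ⟨hx₀, ?_, ?_⟩,
    Set.inter_subset_left, hcard, ?_⟩
  · intro p hp
    rw [hval₀] at hp
    obtain ⟨i, hi, rfl⟩ := hp
    exact ⟨⟨i, hi⟩, hmemV x₀ hx₀ i⟩
  · rintro ⟨i, hi⟩
    refine ⟨F x₀ i, ?_, hmemV x₀ hx₀ i⟩
    rw [hval₀]
    exact ⟨i, hi, rfl⟩
  · rintro x ⟨hxW, hxUg⟩
    apply Set.Subset.antisymm
    · intro p hp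
      have hpf : p ∈ Set.range (F x) := (hval x hxW) ▸ hsub x hp
      obtain ⟨j, rfl⟩ := hpf
      obtain ⟨⟨i, hi⟩, hpVi⟩ := hxUg.1 _ hp
      have : j = i := huniqV _ j i (hmemV x hxW j) hpVi
      exact ⟨j, by rw [this]; exact hi, rfl⟩
    · rintro p ⟨i, hi, rfl⟩
      obtain ⟨p', hp'g, hp'Vi⟩ := hxUg.2 ⟨i, hi⟩
      have hpf : p' ∈ Set.range (F x) := (hval x hxW) ▸ hsub x hp'g
      obtain ⟨j, rfl⟩ := hpf
      have : j = i := huniqV _ j i (hmemV x hxW j) hp'Vi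
      rwa [← this]

end IndexSet
section CMap

variable {X Y : Type*} [TopologicalSpace X] [TopologicalSpace Y] {m : ℕ}

lemma exists_nvmap_of_local (S : X → Set Y)
    (hloc : ∀ x₀ : X, ∃ (W : Set X), IsOpen W ∧ x₀ ∈ W ∧
      ∃ (N : ℕ) (F : X → Fin N → Y) (A : Finset (Fin N)), A.card = m ∧
        (∀ x ∈ W, ContinuousAt F x) ∧ (∀ x ∈ W, Function.Injective (F x)) ∧
        (∀ x ∈ W, S x = F x '' (A : Set (Fin N)))) :
    ∃ h : NValuedMap X Y m, ∀ x, (h x).values = S x := by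
  classical
  have hex : ∀ x : X, ∃ c : UnordConf m Y, c.values = S x := by
    intro x
    obtain ⟨W, _, hxW, N, F, A, hA, _, hinj, hSW⟩ := hloc x
    exact ⟨mkConf (F x) (hinj x hxW) A hA, (mkConf_values _ _ _ _).trans (hSW x hxW).symm⟩
  choose h₀ hh₀ using hex
  have hcont : Continuous h₀ := by
    rw [continuous_iff_continuousAt]
    intro x₀
    obtain ⟨W, hWopen, hx₀W, N, F, A, hA, hFc, hinj, hSW⟩ := hloc x₀
    have hG : Continuous (fun x : W => (⟨fun j => F x.1 ((A.orderIsoOfFin hA j : Fin N)),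
        fun j j' h => (A.orderIsoOfFin hA).injective
          (Subtype.ext (hinj x.1 x.2 h))⟩ : OrdConf m Y)) := by
      apply Continuous.subtype_mk
      apply continuous_pi
      intro j
      have h1 : Continuous (fun x : W => F x.1) := by
        rw [continuous_iff_continuousAt]
        intro x
        exact (hFc x.1 x.2).comp continuous_subtype_val.continuousAt
      exact (continuous_apply _).comp h1
    have hres : W.domRestrict h₀ = (Quotient.mk (confSetoid m Y)) ∘
        (fun x : W => (⟨fun j => F x.1 ((A.orderIsoOfFin hA j : Fin N)),
          fun j j' h => (A.orderIsoOfFin hA).injective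
            (Subtype.ext (hinj x.1 x.2 h))⟩ : OrdConf m Y)) := by
      funext x
      apply UnordConf.values_injective
      simp only [Function.comp_apply, Set.domRestrict_apply]
      have : UnordConf.values (Y := Y) (Quotient.mk (confSetoid m Y)
          (⟨fun j => F x.1 ((A.orderIsoOfFin hA j : Fin N)),
            fun j j' h => (A.orderIsoOfFin hA).injective
              (Subtype.ext (hinj x.1 x.2 h))⟩ : OrdConf m Y)) =
          F x.1 '' (A : Set (Fin N)) := mkConf_values (F x.1) (hinj x.1 x.2) A hA
      exact (hh₀ x.1).trans ((hSW x.1 x.2).trans this.symm)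
    have hcW : ContinuousOn h₀ W := by
      rw [continuousOn_iff_continuous_restrict, hres]
      exact continuous_confMk.comp hG
    exact hcW.continuousAt (hWopen.mem_nhds hx₀W)
  exact ⟨⟨h₀, hcont⟩, hh₀⟩

end CMap
section Derived

variable {X Y : Type*} [TopologicalSpace X] [TopologicalSpace Y] {n m m₁ m₂ : ℕ}

lemma coe_compl_eq {n : ℕ} (A : Finset (Fin n)) :
    ((Aᶜ : Finset (Fin n)) : Set (Fin n)) = Set.univ \ (A : Set (Fin n)) := by
  rw [Finset.coe_compl, Set.compl_eq_univ_diff]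

/-- The complement of a submap is a continuous multivalued map. -/
lemma exists_complement [T2Space Y] [Nonempty Y] (hmn : m ≤ n)
    {f : NValuedMap X Y n} {g : NValuedMap X Y m} (hsub : IsSubmap g f) :
    ∃ h : NValuedMap X Y (n - m), ∀ x, (h x).values = (f x).values \ (g x).values := by
  apply exists_nvmap_of_local
  intro x₀
  obtain ⟨W, F, V, hWopen, hx₀W, hVopen, hVd, hinj, hval, hmemV, hFc⟩ :=
    exists_local_lift f x₀
  obtain ⟨W', A, hW'open, hx₀W', hW'W, hAcard, hgval⟩ :=
    exists_index_set hsub hWopen hx₀W hVd hinj hval hmemV hVopen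
  refine ⟨W', hW'open, hx₀W', n, F, Aᶜ, ?_, fun x hx => hFc x (hW'W hx),
    fun x hx => hinj x (hW'W hx), ?_⟩
  · rw [Finset.card_compl, Fintype.card_fin, hAcard]
  · intro x hx
    rw [coe_compl_eq, Set.image_diff (hinj x (hW'W hx)), Set.image_univ,
      hval x (hW'W hx), hgval x hx]

lemma inter_ncard_locallyConstant [T2Space Y] [Nonempty Y]
    {f : NValuedMap X Y n} {g₁ : NValuedMap X Y m₁} {g₂ : NValuedMap X Y m₂}
    (hs₁ : IsSubmap g₁ f) (hs₂ : IsSubmap g₂ f) :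
    IsLocallyConstant (fun x => ((g₁ x).values ∩ (g₂ x).values).ncard) := by
  rw [IsLocallyConstant.iff_exists_open]
  intro x₀
  obtain ⟨W, F, V, hWopen, hx₀W, hVopen, hVd, hinj, hval, hmemV, hFc⟩ :=
    exists_local_lift f x₀
  obtain ⟨W₁, A₁, hW₁open, hx₀W₁, hW₁W, hA₁card, hg₁val⟩ :=
    exists_index_set hs₁ hWopen hx₀W hVd hinj hval hmemV hVopen
  obtain ⟨W₂, A₂, hW₂open, hx₀W₂, hW₂W, hA₂card, hg₂val⟩ :=
    exists_index_set hs₂ hWopen hx₀W hVd hinj hval hmemV hVopen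
  refine ⟨W₁ ∩ W₂, hW₁open.inter hW₂open, ⟨hx₀W₁, hx₀W₂⟩, ?_⟩
  have key : ∀ x, x ∈ W₁ ∩ W₂ →
      ((g₁ x).values ∩ (g₂ x).values).ncard
        = ((A₁ : Set (Fin n)) ∩ (A₂ : Set (Fin n))).ncard := by
    rintro x ⟨h1, h2⟩
    rw [hg₁val x h1, hg₂val x h2, ← Set.image_inter (hinj x (hW₁W h1)),
      Set.ncard_image_of_injective _ (hinj x (hW₁W h1))]
  intro x hx
  rw [key x hx, key x₀ ⟨hx₀W₁, hx₀W₂⟩]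

lemma exists_inter_map [T2Space Y] [Nonempty Y] {c : ℕ}
    {f : NValuedMap X Y n} {g₁ : NValuedMap X Y m₁} {g₂ : NValuedMap X Y m₂}
    (hs₁ : IsSubmap g₁ f) (hs₂ : IsSubmap g₂ f)
    (hc : ∀ x, ((g₁ x).values ∩ (g₂ x).values).ncard = c) :
    ∃ h : NValuedMap X Y c, ∀ x, (h x).values = (g₁ x).values ∩ (g₂ x).values := by
  apply exists_nvmap_of_local
  intro x₀
  obtain ⟨W, F, V, hWopen, hx₀W, hVopen, hVd, hinj, hval, hmemV, hFc⟩ :=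
    exists_local_lift f x₀
  obtain ⟨W₁, A₁, hW₁open, hx₀W₁, hW₁W, hA₁card, hg₁val⟩ :=
    exists_index_set hs₁ hWopen hx₀W hVd hinj hval hmemV hVopen
  obtain ⟨W₂, A₂, hW₂open, hx₀W₂, hW₂W, hA₂card, hg₂val⟩ :=
    exists_index_set hs₂ hWopen hx₀W hVd hinj hval hmemV hVopen
  have himg : ∀ x, x ∈ W₁ ∩ W₂ →
      (g₁ x).values ∩ (g₂ x).values = F x '' ((A₁ ∩ A₂ : Finset (Fin n)) : Set (Fin n)) := by
    rintro x ⟨h1, h2⟩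
    rw [hg₁val x h1, hg₂val x h2, ← Set.image_inter (hinj x (hW₁W h1)), Finset.coe_inter]
  refine ⟨W₁ ∩ W₂, hW₁open.inter hW₂open, ⟨hx₀W₁, hx₀W₂⟩, n, F, A₁ ∩ A₂, ?_,
    fun x hx => hFc x (hW₁W hx.1), fun x hx => hinj x (hW₁W hx.1),
    fun x hx => (himg x hx).symm ▸ (himg x hx)⟩
  have := hc x₀
  rw [himg x₀ ⟨hx₀W₁, hx₀W₂⟩, Set.ncard_image_of_injective _ (hinj x₀ (hW₁W hx₀W₁)),
    Set.ncard_coe_finset] at this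
  exact this

end Derived
section Counting

variable {Y : Type*} [DecidableEq Y]

lemma finset_disjoint_of_card {l : ℕ} (t : Fin l → Finset Y)
    (h : (Finset.univ.biUnion t).card = ∑ i, (t i).card) :
    ∀ i j, i ≠ j → Disjoint (t i) (t j) := by
  intro i j hij
  rw [Finset.disjoint_left]
  intro y hyi hyj
  set B : Finset Y := (Finset.univ.erase i).biUnion t with hB
  have hunion : Finset.univ.biUnion t = t i ∪ B := by
    ext z
    simp only [Finset.mem_biUnion, Finset.mem_union, Finset.mem_erase, Finset.mem_univ,
      true_and, hB]
    constructor
    · rintro ⟨k, hk⟩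
      rcases eq_or_ne k i with rfl | hki
      · exact Or.inl hk
      · exact Or.inr ⟨k, ⟨hki, trivial⟩, hk⟩
    · rintro (hk | ⟨k, _, hk⟩)
      exacts [⟨i, hk⟩, ⟨k, hk⟩]
  have h1 := Finset.card_union_add_card_inter (t i) B
  have h2 : 1 ≤ (t i ∩ B).card := by
    apply Finset.card_pos.mpr
    exact ⟨y, Finset.mem_inter.mpr ⟨hyi, Finset.mem_biUnion.mpr
      ⟨j, Finset.mem_erase.mpr ⟨hij.symm, Finset.mem_univ j⟩, hyj⟩⟩⟩
  have h3 : B.card ≤ ∑ k ∈ Finset.univ.erase i, (t k).card := Finset.card_biUnion_le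
  have h4 : ∑ k ∈ Finset.univ.erase i, (t k).card + (t i).card = ∑ k, (t k).card :=
    Finset.sum_erase_add _ _ (Finset.mem_univ i)
  have h5 : (t i ∪ B).card = ∑ k, (t k).card := by rw [← hunion, h]
  omega

lemma set_disjoint_of_ncard {l : ℕ} (s : Fin l → Set Y) (hfin : ∀ i, (s i).Finite)
    (h : (⋃ i, s i).ncard = ∑ i, (s i).ncard) :
    ∀ i j, i ≠ j → Disjoint (s i) (s j) := by
  classical
  set t : Fin l → Finset Y := fun i => (hfin i).toFinset with ht
  have hcoe : ∀ i, (t i : Set Y) = s i := fun i => (hfin i).coe_toFinset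
  have hbu : ((Finset.univ.biUnion t : Finset Y) : Set Y) = ⋃ i, s i := by
    rw [Finset.coe_biUnion]
    simp [hcoe]
  have hcard : (Finset.univ.biUnion t).card = ∑ i, (t i).card := by
    have h1 : (Finset.univ.biUnion t).card = (⋃ i, s i).ncard := by
      rw [← hbu, Set.ncard_coe_finset]
    have h2 : ∀ i, (t i).card = (s i).ncard := by
      intro i
      rw [← hcoe i, Set.ncard_coe_finset]
    rw [h1, h]
    exact (Finset.sum_congr rfl fun i _ => (h2 i).symm)
  intro i j hij
  have := finset_disjoint_of_card t hcard i j hij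
  rw [← hcoe i, ← hcoe j]
  exact Finset.disjoint_coe.mpr this

lemma sum_ncard_inter_of_cover {l : ℕ} (S : Set Y) (hS : S.Finite)
    (T : Fin l → Set Y) (hT : ∀ i, (T i).Finite)
    (hd : ∀ i j, i ≠ j → Disjoint (T i) (T j)) (hcov : S ⊆ ⋃ i, T i) :
    ∑ i, (S ∩ T i).ncard = S.ncard := by
  classical
  set t : Fin l → Finset Y := fun i => (hS.inter_of_left (T i)).toFinset with ht
  have hcoe : ∀ i, (t i : Set Y) = S ∩ T i := fun i => Set.Finite.coe_toFinset _
  have hdisj : ∀ i ∈ Finset.univ, ∀ j ∈ Finset.univ, i ≠ j → Disjoint (t i) (t j) := by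
    intro i _ j _ hij
    rw [← Finset.disjoint_coe] at *
    rw [hcoe i, hcoe j]
    exact ((hd i j hij).mono Set.inter_subset_right Set.inter_subset_right)
  have hbu : ((Finset.univ.biUnion t : Finset Y) : Set Y) = S := by
    rw [Finset.coe_biUnion]
    simp only [Finset.coe_univ, Set.mem_univ, Set.iUnion_true, hcoe]
    rw [← Set.inter_iUnion]
    exact Set.inter_eq_left.mpr hcov
  have := Finset.card_biUnion hdisj
  rw [← Set.ncard_coe_finset (Finset.univ.biUnion t), hbu] at this
  rw [this]
  refine Finset.sum_congr rfl fun i _ => ?_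
  rw [← hcoe i, Set.ncard_coe_finset]

end Counting
section Existence

variable {X Y : Type*} [TopologicalSpace X] [TopologicalSpace Y] {n k m : ℕ}

lemma NVPartition.submap_of_mem {f : NValuedMap X Y n} {l : ℕ} (P : NVPartition f l)
    (i : Fin l) : IsSubmap (P.maps i) f := by
  intro x
  rw [P.values_eq x]
  exact Set.subset_iUnion (fun j => UnordConf.values (P.maps j x)) i

lemma iUnion_fin_add {α : Type*} {l₁ l₂ : ℕ} (s : Fin (l₁ + l₂) → Set α) :
    ⋃ i, s i = (⋃ i, s (Fin.castAdd l₂ i)) ∪ ⋃ i, s (Fin.natAdd l₁ i) := by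
  ext z
  simp only [Set.mem_iUnion, Set.mem_union]
  constructor
  · rintro ⟨i, hi⟩
    cases i using Fin.addCases with
    | left j => exact Or.inl ⟨j, hi⟩
    | right j => exact Or.inr ⟨j, hi⟩
  · rintro (⟨i, hi⟩ | ⟨i, hi⟩) <;> exact ⟨_, hi⟩

lemma NVPartition.combine {f : NValuedMap X Y n} {g : NValuedMap X Y k}
    {h : NValuedMap X Y m} (hkm : k + m = n)
    (hunion : ∀ x, (f x).values = (g x).values ∪ (h x).values)
    {l₁ l₂ : ℕ} (P₁ : NVPartition g l₁) (P₂ : NVPartition h l₂)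
    (h₁ : P₁.IsIrreduciblePartition) (h₂ : P₂.IsIrreduciblePartition) :
    ∃ P : NVPartition f (l₁ + l₂), P.IsIrreduciblePartition := by
  classical
  set pair : Fin (l₁ + l₂) → Σ m', NValuedMap X Y m' :=
    Fin.addCases (fun i => ⟨P₁.card i, P₁.maps i⟩) (fun i => ⟨P₂.card i, P₂.maps i⟩)
    with hpair
  have hpl : ∀ i₁ : Fin l₁, pair (Fin.castAdd l₂ i₁) = ⟨P₁.card i₁, P₁.maps i₁⟩ :=
    fun i₁ => Fin.addCases_left i₁
  have hpr : ∀ i₂ : Fin l₂, pair (Fin.natAdd l₁ i₂) = ⟨P₂.card i₂, P₂.maps i₂⟩ :=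
    fun i₂ => Fin.addCases_right i₂
  have aux : ∀ (Q : (Σ m', NValuedMap X Y m') → Prop),
      (∀ i₁, Q ⟨P₁.card i₁, P₁.maps i₁⟩) → (∀ i₂, Q ⟨P₂.card i₂, P₂.maps i₂⟩) →
      ∀ i, Q (pair i) := by
    intro Q hL hR i
    cases i using Fin.addCases with
    | left j => rw [hpl j]; exact hL j
    | right j => rw [hpr j]; exact hR j
  refine ⟨⟨fun i => (pair i).1, ?_, fun i => (pair i).2, ?_, ?_⟩, ?_⟩
  · exact aux (fun p => 0 < p.1) (fun i₁ => P₁.card_pos i₁) (fun i₂ => P₂.card_pos i₂)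
  · rw [Fin.sum_univ_add]
    have e1 : ∀ i₁ : Fin l₁, (pair (Fin.castAdd l₂ i₁)).1 = P₁.card i₁ :=
      fun i₁ => congrArg Sigma.fst (hpl i₁)
    have e2 : ∀ i₂ : Fin l₂, (pair (Fin.natAdd l₁ i₂)).1 = P₂.card i₂ :=
      fun i₂ => congrArg Sigma.fst (hpr i₂)
    rw [Finset.sum_congr rfl fun i _ => e1 i, Finset.sum_congr rfl fun i _ => e2 i,
      P₁.sum_card, P₂.sum_card, hkm]
  · intro x
    rw [iUnion_fin_add (fun i => UnordConf.values ((pair i).2 x)), hunion x,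
      P₁.values_eq x, P₂.values_eq x]
    congr 1
    · exact Set.iUnion_congr fun i₁ =>
        (congrArg (fun r : Σ m', NValuedMap X Y m' => UnordConf.values (r.2 x)) (hpl i₁)).symm
    · exact Set.iUnion_congr fun i₂ =>
        (congrArg (fun r : Σ m', NValuedMap X Y m' => UnordConf.values (r.2 x)) (hpr i₂)).symm
  · exact aux (fun p => IsIrreducibleNV p.2) (fun i₁ => h₁ i₁) (fun i₂ => h₂ i₂)

lemma values_eq_empty {c : UnordConf 0 Y} : c.values = ∅ :=
  (Set.ncard_eq_zero (UnordConf.values_finite c)).mp (UnordConf.ncard_values c)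

lemma exists_zero_partition (f : NValuedMap X Y 0) :
    ∃ P : NVPartition f 0, P.IsIrreduciblePartition := by
  refine ⟨⟨fun i => i.elim0, fun i => i.elim0, fun i => i.elim0, by simp, fun x => ?_⟩,
    fun i => i.elim0⟩
  rw [Set.iUnion_of_empty, values_eq_empty]

theorem exists_irred_partition [T2Space Y] [Nonempty Y] :
    ∀ (n : ℕ) (f : NValuedMap X Y n),
      ∃ (l : ℕ) (P : NVPartition f l), P.IsIrreduciblePartition := by
  intro n
  induction n using Nat.strong_induction_on with
  | _ n IH =>
  intro f
  rcases Nat.eq_zero_or_pos n with rfl | hn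
  · obtain ⟨P, hP⟩ := exists_zero_partition f
    exact ⟨0, P, hP⟩
  by_cases hirr : IsIrreducibleNV f
  · refine ⟨1, ⟨fun _ => n, fun _ => hn, fun _ => f, by simp, fun x => ?_⟩, fun _ => hirr⟩
    rw [Set.iUnion_const]
  rw [IsIrreducibleNV, not_not] at hirr
  obtain ⟨k, g, hk, hkn, hsub⟩ := hirr
  obtain ⟨h, hh⟩ := exists_complement (le_of_lt hkn) hsub
  have hunion : ∀ x, (f x).values = (g x).values ∪ (h x).values := by
    intro x
    rw [hh x, Set.union_diff_cancel (hsub x)]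
  obtain ⟨l₁, P₁, hP₁⟩ := IH k hkn g
  obtain ⟨l₂, P₂, hP₂⟩ := IH (n - k) (Nat.sub_lt hn hk) h
  obtain ⟨P, hP⟩ := NVPartition.combine (Nat.add_sub_cancel' (le_of_lt hkn)) hunion
    P₁ P₂ hP₁ hP₂
  exact ⟨l₁ + l₂, P, hP⟩

end Existence
section Uniqueness

variable {X Y : Type*} [TopologicalSpace X] [TopologicalSpace Y] {n : ℕ}

lemma NVPartition.values_disjoint {f : NValuedMap X Y n} {l : ℕ} (P : NVPartition f l)
    (x : X) : ∀ i j, i ≠ j →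
      Disjoint ((P.maps i x).values) ((P.maps j x).values) := by
  classical
  apply set_disjoint_of_ncard _ (fun i => UnordConf.values_finite _)
  rw [← P.values_eq x, UnordConf.ncard_values]
  rw [Finset.sum_congr rfl fun i _ => UnordConf.ncard_values (P.maps i x), P.sum_card]

theorem partition_unique [T2Space Y] [Nonempty Y] [PreconnectedSpace X] [Nonempty X]
    (f : NValuedMap X Y n) {l l' : ℕ}
    (P : NVPartition f l) (P' : NVPartition f l')
    (hP : P.IsIrreduciblePartition) (hP' : P'.IsIrreduciblePartition) :
    ∃ e : Fin l' ≃ Fin l, ∀ i x, (P'.maps i x).values = (P.maps (e i) x).values := by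
  classical
  set x₀ : X := Classical.arbitrary X with hx₀
  set v' : Fin l' → X → Set Y := fun i x => (P'.maps i x).values with hv'
  set v : Fin l → X → Set Y := fun j x => (P.maps j x).values with hv
  have hconst : ∀ (i : Fin l') (j : Fin l) (x : X),
      (v' i x ∩ v j x).ncard = (v' i x₀ ∩ v j x₀).ncard := by
    intro i j x
    exact (inter_ncard_locallyConstant (P'.submap_of_mem i)
      (P.submap_of_mem j)).apply_eq_of_preconnectedSpace x x₀
  set c : Fin l' → Fin l → ℕ := fun i j => (v' i x₀ ∩ v j x₀).ncard with hc
  have hfin' : ∀ i x, (v' i x).Finite := fun i x => UnordConf.values_finite _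
  have hfin : ∀ j x, (v j x).Finite := fun j x => UnordConf.values_finite _
  have hcle₁ : ∀ i j, c i j ≤ P'.card i := by
    intro i j
    have := Set.ncard_le_ncard (Set.inter_subset_left :
      v' i x₀ ∩ v j x₀ ⊆ v' i x₀) (hfin' i x₀)
    rwa [UnordConf.ncard_values] at this
  have hcle₂ : ∀ i j, c i j ≤ P.card j := by
    intro i j
    have := Set.ncard_le_ncard (Set.inter_subset_right :
      v' i x₀ ∩ v j x₀ ⊆ v j x₀) (hfin j x₀)
    rwa [UnordConf.ncard_values] at this
  have key : ∀ i j, c i j = 0 ∨ (c i j = P'.card i ∧ c i j = P.card j) := by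
    intro i j
    by_contra hcon
    push_neg at hcon
    obtain ⟨hne, hne2⟩ := hcon
    have hpos : 0 < c i j := Nat.pos_of_ne_zero hne
    obtain ⟨h, hh⟩ := exists_inter_map (P'.submap_of_mem i) (P.submap_of_mem j)
      (fun x => hconst i j x)
    rcases Nat.lt_or_ge (c i j) (P'.card i) with hlt | hge
    · exact hP' i ⟨c i j, h, hpos, hlt, fun x => by
        rw [hh x]; exact Set.inter_subset_left⟩
    · have heq1 : c i j = P'.card i := le_antisymm (hcle₁ i j) hge
      have hlt2 : c i j < P.card j := lt_of_le_of_ne (hcle₂ i j) (hne2 heq1)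
      exact hP j ⟨c i j, h, hpos, hlt2, fun x => by
        rw [hh x]; exact Set.inter_subset_right⟩
  have rowsum : ∀ i, ∑ j, c i j = P'.card i := by
    intro i
    have := sum_ncard_inter_of_cover (v' i x₀) (hfin' i x₀) (fun j => v j x₀)
      (fun j => hfin j x₀) (P.values_disjoint x₀) ?_
    · exact this.trans (UnordConf.ncard_values (P'.maps i x₀))
    · rw [← P.values_eq x₀]
      exact P'.submap_of_mem i x₀
  have colsum : ∀ j, ∑ i, c i j = P.card j := by
    intro j
    have := sum_ncard_inter_of_cover (v j x₀) (hfin j x₀) (fun i => v' i x₀)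
      (fun i => hfin' i x₀) (P'.values_disjoint x₀) ?_
    · simp only [Set.inter_comm (v j x₀)] at this
      exact this.trans (UnordConf.ncard_values (P.maps j x₀))
    · rw [← P'.values_eq x₀]
      exact P.submap_of_mem j x₀
  have hpos_ex : ∀ i, ∃ j, 0 < c i j := by
    intro i
    by_contra hno
    push_neg at hno
    have : ∑ j, c i j = 0 := Finset.sum_eq_zero fun j _ => Nat.le_zero.mp (hno j)
    rw [rowsum i] at this
    have := P'.card_pos i
    omega
  have hval_eq : ∀ i j, 0 < c i j → ∀ x, v' i x = v j x := by
    intro i j hpos x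
    obtain ⟨hci, hcj⟩ := (key i j).resolve_left (Nat.pos_iff_ne_zero.mp hpos)
    have hx : (v' i x ∩ v j x).ncard = c i j := hconst i j x
    have h1 : v' i x ∩ v j x = v' i x := by
      apply Set.eq_of_subset_of_ncard_le Set.inter_subset_left _ (hfin' i x)
      rw [hx, UnordConf.ncard_values, ← hci]
    have h2 : v' i x ∩ v j x = v j x := by
      apply Set.eq_of_subset_of_ncard_le Set.inter_subset_right _ (hfin j x)
      rw [hx, UnordConf.ncard_values, ← hcj]
    rw [← h1, h2]
  have huniq_j : ∀ i j j', 0 < c i j → 0 < c i j' → j = j' := by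
    intro i j j' h1 h2
    by_contra hne
    have e1 : c i j = P'.card i := ((key i j).resolve_left (Nat.pos_iff_ne_zero.mp h1)).1
    have e2 : c i j' = P'.card i := ((key i j').resolve_left (Nat.pos_iff_ne_zero.mp h2)).1
    have hs : ∑ x ∈ ({j, j'} : Finset (Fin l)), c i x ≤ ∑ x, c i x :=
      Finset.sum_le_sum_of_subset (Finset.subset_univ _)
    rw [Finset.sum_pair hne, rowsum i, e1, e2] at hs
    have := P'.card_pos i
    omega
  have e0 : ∀ i, ∃ j, 0 < c i j := hpos_ex
  choose e₀ he₀ using e0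
  have hinj : Function.Injective e₀ := by
    intro i₁ i₂ hee
    by_contra hne
    have hv1 : v' i₁ x₀ = v (e₀ i₁) x₀ := hval_eq i₁ (e₀ i₁) (he₀ i₁) x₀
    have hv2 : v' i₂ x₀ = v (e₀ i₂) x₀ := hval_eq i₂ (e₀ i₂) (he₀ i₂) x₀
    rw [← hee, ← hv1] at hv2
    have hd : Disjoint (v' i₁ x₀) (v' i₂ x₀) := P'.values_disjoint x₀ i₁ i₂ hne
    rw [hv2] at hd
    have hempty : v' i₁ x₀ = ∅ := disjoint_self.mp hd
    have : (v' i₁ x₀).ncard = P'.card i₁ := UnordConf.ncard_values _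
    rw [hempty, Set.ncard_empty] at this
    have := P'.card_pos i₁
    omega
  have hsurj : Function.Surjective e₀ := by
    intro j
    have hpos : 0 < ∑ i, c i j := by
      rw [colsum j]; exact P.card_pos j
    have : ∃ i, 0 < c i j := by
      by_contra hno
      push_neg at hno
      have : ∑ i, c i j = 0 := Finset.sum_eq_zero fun i _ => Nat.le_zero.mp (hno i)
      omega
    obtain ⟨i, hi⟩ := this
    exact ⟨i, huniq_j i (e₀ i) j (he₀ i) hi⟩
  refine ⟨Equiv.ofBijective e₀ ⟨hinj, hsurj⟩, fun i x => ?_⟩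
  exact hval_eq i (e₀ i) (he₀ i) x

end Uniqueness
theorem statement_1 {X Y : Type*} [TopologicalSpace X] [TopologicalSpace Y]
    [ConnectedSpace X] [ConnectedSpace Y]
    (hX : IsFinitePolyhedron X) (hY : IsFinitePolyhedron Y)
    {n : ℕ} (f : NValuedMap X Y n) :
    ∃ (k : ℕ) (P : NVPartition f k), P.IsIrreduciblePartition ∧
      ∀ (k' : ℕ) (P' : NVPartition f k'), P'.IsIrreduciblePartition →
        ∃ e : Fin k' ≃ Fin k, ∀ (i : Fin k') (x : X),
          UnordConf.values (P'.maps i x) = UnordConf.values (P.maps (e i) x) := by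
  classical
  obtain ⟨N, K, hKfin, ⟨eY⟩⟩ := hY
  haveI : T2Space Y := eY.symm.t2Space
  rcases Nat.eq_zero_or_pos n with rfl | hn
  · obtain ⟨P, hP⟩ := exists_zero_partition f
    refine ⟨0, P, hP, ?_⟩
    intro k' P' hP'
    have hempty : IsEmpty (Fin k') := by
      constructor
      intro i
      have h1 : ∑ j, P'.card j = 0 := P'.sum_card
      have h2 := P'.card_pos i
      have h3 : P'.card i ≤ ∑ j, P'.card j :=
        Finset.single_le_sum (fun j _ => Nat.zero_le _) (Finset.mem_univ i)
      omega
    exact ⟨Equiv.equivOfIsEmpty _ _, fun i => hempty.elim i⟩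
  · haveI : Nonempty Y := by
      obtain ⟨a, -⟩ := Quotient.exists_rep (f (Classical.arbitrary X))
      exact ⟨a.1 ⟨0, hn⟩⟩
    obtain ⟨l, P, hP⟩ := exists_irred_partition n f
    exact ⟨l, P, hP, fun k' P' hP' => partition_unique f P P' hP hP'⟩
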